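/- Proposition 2 (full converse characterization): if the derivative with respect to r of exp(w(π_i^C - π_i^D)) is strictly positive for all i = 1,…,N-1 (with w > 0), then exactly one of the following holds: (a) R ≥ S and T ≥ P with at least one inequality strict; (b) R > S, T < P, and N < (R-S+P-T)/(P-T); (c) R < S, T > P, and N < (S-R+T-P)/(S-R). -/

import Mathlib

lemma deriv_key (N : ℕ) (R S T P w : ℝ) (hN : 0 < N) (hw : 0 < w) (i : ℝ)
    (h : 0 < deriv (fun r : ℝ => Real.exp (w *
        ((r * R + (1 - r) * ((i * R + ((N : ℝ) - i) * S) / N))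
       - (r * P + (1 - r) * ((i * T + ((N : ℝ) - i) * P) / N))))) 0) :
    0 < ((N : ℝ) - i) * (R - S) + i * (T - P) := by
  set c1 := (i * R + ((N : ℝ) - i) * S) / N with hc1
  set c2 := (i * T + ((N : ℝ) - i) * P) / N with hc2
  set m := w * ((R - c1) - (P - c2)) with hm
  have hf : HasDerivAt (fun r : ℝ => w *
      ((r * R + (1 - r) * c1) - (r * P + (1 - r) * c2))) m 0 := by
    have : HasDerivAt (fun r : ℝ =>
        (r * R + (1 - r) * c1) - (r * P + (1 - r) * c2))
        ((R - c1) - (P - c2)) 0 := by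
      have h1 : HasDerivAt (fun r : ℝ => r * R + (1 - r) * c1) (R - c1) 0 := by
        have := ((hasDerivAt_id (0:ℝ)).mul_const R).add
          (((hasDerivAt_const (0:ℝ) (1:ℝ)).sub (hasDerivAt_id 0)).mul_const c1)
        exact this.congr_deriv (by ring)
      have h2 : HasDerivAt (fun r : ℝ => r * P + (1 - r) * c2) (P - c2) 0 := by
        have := ((hasDerivAt_id (0:ℝ)).mul_const P).add
          (((hasDerivAt_const (0:ℝ) (1:ℝ)).sub (hasDerivAt_id 0)).mul_const c2)
        exact this.congr_deriv (by ring)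
      exact h1.sub h2
    simpa [hm, mul_comm] using this.const_mul w
  have hexp := hf.exp
  have hd := hexp.deriv
  rw [hd] at h
  have hm0 : 0 < m := by
    rcases mul_pos_iff.mp h with ⟨-, hm⟩ | ⟨he, -⟩
    · exact hm
    · exact absurd he (not_lt.mpr (Real.exp_pos _).le)
  have hNpos : (0 : ℝ) < N := by exact_mod_cast hN
  have hs : 0 < (R - c1) - (P - c2) := by
    by_contra hc
    push_neg at hc
    nlinarith
  rw [hc1, hc2] at hs
  have key := mul_pos hNpos hs
  have heq : (N : ℝ) * (R - (i * R + ((N : ℝ) - i) * S) / N -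
      (P - (i * T + ((N : ℝ) - i) * P) / N)) = ((N : ℝ) - i) * (R - S) + i * (T - P) := by
    field_simp
    ring
  rw [heq] at key
  exact key

/-- Proposition 2: full converse characterization of strong favouring. -/
theorem strong_favouring_characterization (N : ℕ) (R S T P w : ℝ)
    (hN : 2 ≤ N) (hw : 0 < w)
    (hstrong : ∀ i : ℕ, 1 ≤ i → i ≤ N - 1 → ∀ r ∈ Set.Icc (0 : ℝ) 1,
      0 < deriv (fun r : ℝ => Real.exp (w *
        ((r * R + (1 - r) * ((i * R + ((N : ℝ) - i) * S) / N))
       - (r * P + (1 - r) * ((i * T + ((N : ℝ) - i) * P) / N))))) r) :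
    ((R ≥ S ∧ T ≥ P ∧ (R > S ∨ T > P))
        ∧ ¬(R > S ∧ T < P ∧ (N : ℝ) < (R - S + P - T) / (P - T))
        ∧ ¬(R < S ∧ T > P ∧ (N : ℝ) < (S - R + T - P) / (S - R)))
    ∨ (¬(R ≥ S ∧ T ≥ P ∧ (R > S ∨ T > P))
        ∧ (R > S ∧ T < P ∧ (N : ℝ) < (R - S + P - T) / (P - T))
        ∧ ¬(R < S ∧ T > P ∧ (N : ℝ) < (S - R + T - P) / (S - R)))
    ∨ (¬(R ≥ S ∧ T ≥ P ∧ (R > S ∨ T > P))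
        ∧ ¬(R > S ∧ T < P ∧ (N : ℝ) < (R - S + P - T) / (P - T))
        ∧ (R < S ∧ T > P ∧ (N : ℝ) < (S - R + T - P) / (S - R))) := by
  have hN0 : 0 < N := by omega
  have h0 : (0 : ℝ) ∈ Set.Icc (0 : ℝ) 1 := by constructor <;> norm_num
  have h1 : 0 < ((N : ℝ) - 1) * (R - S) + 1 * (T - P) := by
    have := hstrong 1 le_rfl (by omega) 0 h0
    have := deriv_key N R S T P w hN0 hw 1 (by exact_mod_cast this)
    exact this
  have h2 : 0 < ((N : ℝ) - ((N : ℝ) - 1)) * (R - S) + ((N : ℝ) - 1) * (T - P) := by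
    have hh := hstrong (N - 1) (by omega) le_rfl 0 h0
    have hcast : ((N - 1 : ℕ) : ℝ) = (N : ℝ) - 1 := by
      push_cast [Nat.cast_sub (by omega : 1 ≤ N)]; ring
    rw [hcast] at hh
    exact deriv_key N R S T P w hN0 hw ((N : ℝ) - 1) hh
  have hNR : (2 : ℝ) ≤ N := by exact_mod_cast hN
  set a := R - S with ha
  set b := T - P with hb
  have h1' : 0 < ((N : ℝ) - 1) * a + b := by linarith
  have h2' : 0 < a + ((N : ℝ) - 1) * b := by nlinarith
  rcases lt_trichotomy a 0 with haneg | ha0 | hapos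
  · -- a < 0, then b > 0 (case c)
    have hbpos : 0 < b := by nlinarith
    refine Or.inr (Or.inr ⟨?_, ?_, ?_⟩)
    · rintro ⟨hRS, -, -⟩; linarith
    · rintro ⟨hRS, -, -⟩; linarith
    · refine ⟨by linarith, by linarith, ?_⟩
      rw [lt_div_iff₀ (by linarith : (0:ℝ) < S - R)]
      nlinarith
  · rcases lt_trichotomy b 0 with hbneg | hb0 | hbpos
    · exfalso; nlinarith
    · exfalso; nlinarith
    · -- a = 0, b > 0: case a
      refine Or.inl ⟨⟨by linarith, by linarith, Or.inr (by linarith)⟩, ?_, ?_⟩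
      · rintro ⟨hRS, -, -⟩; linarith
      · rintro ⟨hRS, -, -⟩; linarith
  · rcases lt_trichotomy b 0 with hbneg | hb0 | hbpos
    · -- a > 0, b < 0: case b
      refine Or.inr (Or.inl ⟨?_, ⟨by linarith, by linarith, ?_⟩, ?_⟩)
      · rintro ⟨-, hTP, -⟩; linarith
      · rw [lt_div_iff₀ (by linarith : (0:ℝ) < P - T)]
        nlinarith
      · rintro ⟨hRS, -, -⟩; linarith
    · refine Or.inl ⟨⟨by linarith, by linarith, Or.inl (by linarith)⟩, ?_, ?_⟩
      · rintro ⟨-, hTP, -⟩; linarith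
      · rintro ⟨hRS, -, -⟩; linarith
    · refine Or.inl ⟨⟨by linarith, by linarith, Or.inl (by linarith)⟩, ?_, ?_⟩
      · rintro ⟨-, hTP, -⟩; linarith
      · rintro ⟨hRS, -, -⟩; linarith
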